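/- arXiv:0910.0036 — 2 statements merged into one kernel-verified Lean document; each statement's English description precedes it below -/
import Mathlib

section
/- Let m ≥ 1 and let n₁, …, n_m ≥ 1. Suppose k₁, …, k_m are integers and ψ is a continuous real-valued function on the product space U(n₁) × ⋯ × U(n_m) such that (det u₁)^{k₁} ⋯ (det u_m)^{k_m} · exp(i·ψ(u₁, …, u_m)) = 1 for all (u₁, …, u_m) ∈ U(n₁) × ⋯ × U(n_m). Then k₁ = ⋯ = k_m = 0. -/
lemma scalar_unitary (N : ℕ) (θ : ℝ) :
    Complex.exp ((θ : ℂ) * Complex.I) • (1 : Matrix (Fin N) (Fin N) ℂ) ∈ Matrix.unitaryGroup (Fin N) ℂ := by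
  rw [Matrix.mem_unitaryGroup_iff]
  rw [star_smul, star_one, smul_mul_smul_comm, one_mul]
  have h1 : star (Complex.exp ((θ : ℂ) * Complex.I)) = Complex.exp (-((θ:ℂ) * Complex.I)) := by
    show (starRingEnd ℂ) _ = _
    rw [← Complex.exp_conj]
    congr 1
    simp [Complex.conj_ofReal]
  rw [h1, ← Complex.exp_add, add_neg_cancel, Complex.exp_zero, one_smul]

theorem stmt_7 (m : ℕ) (hm : 1 ≤ m) (n : Fin m → ℕ) (hn : ∀ j, 1 ≤ n j)
    (k : Fin m → ℤ)
    (ψ : (∀ j : Fin m, Matrix.unitaryGroup (Fin (n j)) ℂ) → ℝ) (hψ : Continuous ψ)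
    (h : ∀ u : ∀ j : Fin m, Matrix.unitaryGroup (Fin (n j)) ℂ,
      (∏ j, (Matrix.det (u j : Matrix (Fin (n j)) (Fin (n j)) ℂ)) ^ (k j)) *
        Complex.exp (Complex.I * (ψ u : ℂ)) = 1) :
    ∀ j, k j = 0 := by
  intro j
  by_contra hk
  set N : ℕ := n j with hNdef
  have hN1 : 1 ≤ N := hn j
  have hNR : (N : ℝ) ≠ 0 := by positivity
  have hNC : (N : ℂ) ≠ 0 := by exact_mod_cast Nat.cast_ne_zero.mpr (by omega)
  -- the path
  set p : ℝ → (∀ j' : Fin m, Matrix.unitaryGroup (Fin (n j')) ℂ) :=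
    fun t => Function.update (fun _ => 1) j
      ⟨Complex.exp (((t / N : ℝ) : ℂ) * Complex.I) • 1, scalar_unitary N (t / N)⟩ with hp
  -- continuity of p
  have hpcont : Continuous p := by
    rw [continuous_pi_iff]
    intro j'
    by_cases hj : j' = j
    · subst hj
      simp only [hp, Function.update_self]
      apply Continuous.subtype_mk
      refine continuous_smul.comp (Continuous.prodMk (f := fun x : ℝ => Complex.exp (((x / N : ℝ) : ℂ) * Complex.I)) ?_ continuous_const)
      exact Complex.continuous_exp.comp (by fun_prop)
    · simp only [hp, Function.update_of_ne hj]
      exact continuous_const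
  -- the key exponential identity along the path
  have claim : ∀ t : ℝ, ∃ mm : ℤ, (k j : ℝ) * t + ψ (p t) = mm * (2 * Real.pi) := by
    intro t
    have hpj : ((p t j : Matrix (Fin N) (Fin N) ℂ)) =
        Complex.exp (((t / N : ℝ) : ℂ) * Complex.I) • 1 := by
      simp [hp]
    have hdet : Matrix.det ((p t j : Matrix (Fin N) (Fin N) ℂ)) = Complex.exp ((t : ℂ) * Complex.I) := by
      rw [hpj, Matrix.det_smul, Matrix.det_one, mul_one]
      rw [Fintype.card_fin, ← Complex.exp_nat_mul]
      congr 1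
      push_cast
      field_simp
      rw [hNdef]; ring
    have hprod : (∏ j', (Matrix.det ((p t j' : Matrix (Fin (n j')) (Fin (n j')) ℂ))) ^ (k j')) =
        Complex.exp ((t : ℂ) * Complex.I) ^ (k j) := by
      rw [Finset.prod_eq_single_of_mem j (Finset.mem_univ j)]
      · rw [hdet]
      · intro j' _ hj'
        have : p t j' = 1 := by simp [hp, Function.update_of_ne hj']
        rw [this]
        simp
    have hh := h (p t)
    rw [hprod, ← Complex.exp_int_mul, ← Complex.exp_add] at hh
    rw [Complex.exp_eq_one_iff] at hh
    obtain ⟨mm, hmm⟩ := hh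
    refine ⟨mm, ?_⟩
    have hI : Complex.I * (((k j : ℝ) * t + ψ (p t) : ℝ) : ℂ) =
        Complex.I * (((mm : ℝ) * (2 * Real.pi) : ℝ) : ℂ) := by
      push_cast
      push_cast at hmm
      linear_combination hmm
    have := mul_left_cancel₀ Complex.I_ne_zero hI
    exact_mod_cast this
  -- f and endpoints
  set f : ℝ → ℝ := fun t => (k j : ℝ) * t + ψ (p t) with hf
  have hfcont : Continuous f := by
    apply Continuous.add (by fun_prop)
    exact hψ.comp hpcont
  set T : ℝ := 2 * Real.pi * N with hT
  have hT0 : 0 ≤ T := by positivity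
  have hpT : p T = p 0 := by
    funext j'
    by_cases hj : j' = j
    · subst hj
      apply Subtype.ext
      simp only [hp, Function.update_self]
      have h1 : ((T / N : ℝ) : ℂ) = 2 * Real.pi := by
        rw [hT]
        push_cast
        field_simp
      have h2 : ((0 / N : ℝ) : ℂ) = 0 := by norm_num
      rw [h1, h2]
      rw [show ((2 : ℂ) * Real.pi) * Complex.I = 2 * Real.pi * Complex.I by ring,
        Complex.exp_two_pi_mul_I, zero_mul, Complex.exp_zero]
    · simp [hp, Function.update_of_ne hj]
  obtain ⟨a, ha⟩ := claim T
  obtain ⟨b, hb⟩ := claim 0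
  have hab : (a : ℝ) - b = (k j : ℝ) * N := by
    have h1 : f T - f 0 = (k j : ℝ) * T := by
      simp only [hf, hpT]
      ring
    have h2 : f T = a * (2 * Real.pi) := ha
    have h3 : f 0 = b * (2 * Real.pi) := hb
    have hpi : (Real.pi : ℝ) ≠ 0 := Real.pi_ne_zero
    have : ((a : ℝ) - b) * (2 * Real.pi) = ((k j : ℝ) * N) * (2 * Real.pi) := by
      rw [sub_mul, ← h2, ← h3, h1, hT]; ring
    exact mul_right_cancel₀ (by positivity) this
  have habz : a - b = k j * N := by exact_mod_cast hab
  have hK : k j * (N : ℤ) ≠ 0 := by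
    intro hc
    exact hk (by
      rcases mul_eq_zero.mp hc with h | h
      · exact h
      · omega)
  -- IVT contradiction
  have key : ∃ t ∈ Set.Icc 0 T, f t = f 0 + Real.pi ∨ f t = f 0 - Real.pi := by
    rcases lt_or_gt_of_ne hK with hneg | hpos
    · -- k j * N ≤ -1 : f T ≤ f 0 - 2π
      have h1 : (a : ℝ) - b ≤ -1 := by
        have : a - b ≤ -1 := by omega
        exact_mod_cast this
      have hfT : f T ≤ f 0 - 2 * Real.pi := by
        have ha' : f T = a * (2 * Real.pi) := ha
        have hb' : f 0 = b * (2 * Real.pi) := hb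
        rw [ha', hb']
        nlinarith [Real.pi_pos]
      have hc : f 0 - Real.pi ∈ Set.Icc (f T) (f 0) := by
        constructor
        · nlinarith [Real.pi_pos]
        · nlinarith [Real.pi_pos]
      have := intermediate_value_Icc' hT0 hfcont.continuousOn hc
      obtain ⟨t, ht, hft⟩ := this
      exact ⟨t, ht, Or.inr hft⟩
    · have h1 : (1 : ℝ) ≤ (a : ℝ) - b := by
        have : 1 ≤ a - b := by omega
        exact_mod_cast this
      have hfT : f 0 + 2 * Real.pi ≤ f T := by
        have ha' : f T = a * (2 * Real.pi) := ha
        have hb' : f 0 = b * (2 * Real.pi) := hb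
        rw [ha', hb']
        nlinarith [Real.pi_pos]
      have hc : f 0 + Real.pi ∈ Set.Icc (f 0) (f T) := by
        constructor
        · nlinarith [Real.pi_pos]
        · nlinarith [Real.pi_pos]
      have := intermediate_value_Icc hT0 hfcont.continuousOn hc
      obtain ⟨t, ht, hft⟩ := this
      exact ⟨t, ht, Or.inl hft⟩
  obtain ⟨t, _, hft⟩ := key
  obtain ⟨c, hc⟩ := claim t
  have hpi : (Real.pi : ℝ) ≠ 0 := Real.pi_ne_zero
  rcases hft with hft | hft
  · have : ((2 * (c - b) : ℤ) : ℝ) * Real.pi = 1 * Real.pi := by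
      push_cast
      have h1 : f t = c * (2 * Real.pi) := hc
      have h2 : f 0 = b * (2 * Real.pi) := hb
      linear_combination h2 + hft - h1
    have := mul_right_cancel₀ hpi this
    have : (2 * (c - b) : ℤ) = 1 := by exact_mod_cast this
    omega
  · have : ((2 * (c - b) : ℤ) : ℝ) * Real.pi = (-1) * Real.pi := by
      push_cast
      have h1 : f t = c * (2 * Real.pi) := hc
      have h2 : f 0 = b * (2 * Real.pi) := hb
      linear_combination h2 + hft - h1
    have := mul_right_cancel₀ hpi this
    have : (2 * (c - b) : ℤ) = -1 := by exact_mod_cast this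
    omega
end

section
/- Let n ≥ 3 and let S ⊆ ℂⁿ be the Lie sphere, i.e. the set of all z ∈ ℂⁿ of the form z = e^{iθ}·x for some θ ∈ ℝ and some x ∈ ℝⁿ with x₁² + ⋯ + xₙ² = 1, with the subspace topology from ℂⁿ. For every continuous function φ : S → ℂ with φ(z) ≠ 0 for all z ∈ S, there exist a unique integer k and a continuous function ψ : S → ℂ such that φ(z) = (z₁² + ⋯ + zₙ²)^k · exp(ψ(z)) for all z ∈ S. -/
open Set Complex

/-- Pasting lemma along a seam `{p = 0}`. -/
lemma paste_if_le {X : Type*} [TopologicalSpace X] {K : Set X} {p : X → ℝ} (hp : Continuous p)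
    {f g : X → ℂ} (hf : ContinuousOn f (K ∩ {x | p x ≤ 0}))
    (hg : ContinuousOn g (K ∩ {x | 0 ≤ p x}))
    (he : ∀ x ∈ K, p x = 0 → f x = g x) :
    ContinuousOn (fun x => if p x ≤ 0 then f x else g x) K := by
  intro x hx
  rcases lt_trichotomy (p x) 0 with hlt | heq | hgt
  · have hmem : K ∩ {y | p y ≤ 0} ∈ nhdsWithin x K := by
      apply Filter.inter_mem self_mem_nhdsWithin
      apply mem_nhdsWithin_of_mem_nhds
      exact Filter.mem_of_superset ((isOpen_lt hp continuous_const).mem_nhds hlt)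
        (fun y (hy : p y < 0) => le_of_lt hy)
    refine ((hf x ⟨hx, le_of_lt hlt⟩).mono_of_mem_nhdsWithin hmem).congr_of_eventuallyEq ?_ ?_
    · filter_upwards [hmem] with y hy
      have : p y ≤ 0 := hy.2
      simp [this]
    · simp [le_of_lt hlt]
  · have hfx : (if p x ≤ 0 then f x else g x) = f x := by simp [heq.le]
    show Filter.Tendsto _ _ (nhds ((fun x => if p x ≤ 0 then f x else g x) x))
    rw [show ((fun x => if p x ≤ 0 then f x else g x) x) = f x by simp [heq.le]]
    have hsub : nhdsWithin x K ≤
        nhdsWithin x (K ∩ {y | p y ≤ 0}) ⊔ nhdsWithin x (K ∩ {y | 0 ≤ p y}) := by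
      rw [← nhdsWithin_union]
      apply nhdsWithin_mono
      intro y hy
      rcases le_total (p y) 0 with h | h
      · exact Or.inl ⟨hy, h⟩
      · exact Or.inr ⟨hy, h⟩
    refine Filter.Tendsto.mono_left ?_ hsub
    rw [Filter.tendsto_sup]
    constructor
    · apply Filter.Tendsto.congr' ?_ (hf x ⟨hx, heq.le⟩)
      filter_upwards [self_mem_nhdsWithin] with y hy
      have : p y ≤ 0 := hy.2
      simp [this]
    · have hgx : Filter.Tendsto g (nhdsWithin x (K ∩ {y | 0 ≤ p y})) (nhds (g x)) :=
        hg x ⟨hx, heq.ge⟩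
      rw [← he x hx heq] at hgx
      apply Filter.Tendsto.congr' ?_ hgx
      filter_upwards [self_mem_nhdsWithin] with y hy
      by_cases h : p y ≤ 0
      · have h0 : p y = 0 := le_antisymm h hy.2
        simp [h, he y hy.1 h0]
      · simp [h]
  · have hmem : K ∩ {y | 0 ≤ p y} ∈ nhdsWithin x K := by
      apply Filter.inter_mem self_mem_nhdsWithin
      apply mem_nhdsWithin_of_mem_nhds
      exact Filter.mem_of_superset ((isOpen_lt continuous_const hp).mem_nhds hgt)
        (fun y (hy : 0 < p y) => le_of_lt hy)
    have hmem' : K ∩ {y | 0 < p y} ∈ nhdsWithin x K := by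
      apply Filter.inter_mem self_mem_nhdsWithin
      exact mem_nhdsWithin_of_mem_nhds ((isOpen_lt continuous_const hp).mem_nhds hgt)
    refine ((hg x ⟨hx, le_of_lt hgt⟩).mono_of_mem_nhdsWithin hmem).congr_of_eventuallyEq ?_ ?_
    · filter_upwards [hmem'] with y hy
      have : ¬ (p y ≤ 0) := not_le.mpr hy.2
      simp [this]
    · simp [not_le.mpr hgt]

/-- A continuous function whose exponential is constantly 1, on a preconnected set, is constant. -/
lemma const_of_exp_eq_one {X : Type*} [TopologicalSpace X] {K : Set X} (hK : IsPreconnected K)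
    {d : X → ℂ} (hd : ContinuousOn d K) (h1 : ∀ x ∈ K, Complex.exp (d x) = 1) :
    ∀ x ∈ K, ∀ y ∈ K, d x = d y := by
  have hval : ∀ x ∈ K, ∃ m : ℤ, d x = m * (2 * Real.pi * Complex.I) := by
    intro x hx
    exact Complex.exp_eq_one_iff.mp (h1 x hx)
  have hci : ContinuousOn (fun z => (d z).im) K := Complex.continuous_im.comp_continuousOn hd
  have himval : ∀ x ∈ K, ∀ m : ℤ, d x = m * (2 * Real.pi * Complex.I) →
      (d x).im = m * (2 * Real.pi) := by
    intro x _ m hm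
    rw [hm]
    simp [Complex.mul_im, Complex.mul_re]
  have key : ∀ a b : X, a ∈ K → b ∈ K → ∀ ma mb : ℤ, (d a).im = ma * (2 * Real.pi) →
      (d b).im = mb * (2 * Real.pi) → ma < mb → False := by
    intro a b ha hb ma mb hima himb hlt
    have hsub : Icc ((d a).im) ((d b).im) ⊆ (fun z => (d z).im) '' K :=
      hK.intermediate_value ha hb hci
    have hcmem : (ma * (2 * Real.pi) + Real.pi) ∈ Icc ((d a).im) ((d b).im) := by
      constructor
      · rw [hima]; linarith [Real.pi_pos]
      · rw [himb]
        have : (ma : ℝ) + 1 ≤ mb := by exact_mod_cast hlt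
        nlinarith [Real.pi_pos]
    obtain ⟨z, hz, hzim⟩ := hsub hcmem
    simp only at hzim
    obtain ⟨mz, hmz⟩ := hval z hz
    have himz : (d z).im = mz * (2 * Real.pi) := himval z hz mz hmz
    rw [himz] at hzim
    have h2 : (2 * mz : ℝ) = 2 * ma + 1 := by
      nlinarith [Real.pi_pos]
    have : (2 * mz : ℤ) = 2 * ma + 1 := by exact_mod_cast h2
    omega
  intro x hx y hy
  obtain ⟨mx, hmx⟩ := hval x hx
  obtain ⟨my, hmy⟩ := hval y hy
  have himx := himval x hx mx hmx
  have himy := himval y hy my hmy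
  have : mx = my := by
    by_contra hne
    rcases lt_or_gt_of_ne hne with h | h
    · exact key x y hx hy mx my himx himy h
    · exact key y x hy hx my mx himy himx h
  rw [hmx, hmy, this]


/-- telescoping product of ratios -/
lemma prod_ratio {F : ℕ → ℂ} {N : ℕ} (hF : ∀ j ≤ N, F j ≠ 0) :
    ∏ j ∈ Finset.range N, F (j+1) / F j = F N / F 0 := by
  induction N with
  | zero => simp [div_self (hF 0 le_rfl)]
  | succ m ih =>
    rw [Finset.prod_range_succ, ih (fun j hj => hF j (hj.trans m.le_succ))]
    have h0 : F 0 ≠ 0 := hF 0 (Nat.zero_le _)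
    have hm : F m ≠ 0 := hF m m.le_succ
    field_simp

/-- Lifting lemma: a nonvanishing continuous function on `[0,1] × K` (`K` compact in a metric
space) which has a continuous logarithm at time `0` has a global continuous logarithm. -/
lemma logh {X : Type*} [PseudoMetricSpace X] {K : Set X} (hK : IsCompact K)
    {h : ℝ × X → ℂ} (hc : ContinuousOn h (Set.Icc 0 1 ×ˢ K))
    (hnz : ∀ p ∈ Set.Icc (0:ℝ) 1 ×ˢ K, h p ≠ 0)
    {g₀ : X → ℂ} (hg₀ : ContinuousOn g₀ K) (hg₀e : ∀ x ∈ K, h (0, x) = Complex.exp (g₀ x)) :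
    ∃ G : ℝ × X → ℂ, ContinuousOn G (Set.Icc 0 1 ×ˢ K) ∧ (∀ x ∈ K, G (0, x) = g₀ x) ∧
      ∀ p ∈ Set.Icc (0:ℝ) 1 ×ˢ K, h p = Complex.exp (G p) := by
  rcases K.eq_empty_or_nonempty with rfl | ⟨x₀, hx₀⟩
  · exact ⟨fun p => 0, by simp [ContinuousOn], by simp, by simp⟩
  set C : Set (ℝ × X) := Set.Icc (0:ℝ) 1 ×ˢ K with hC
  have hCcomp : IsCompact C := isCompact_Icc.prod hK
  have hCne : C.Nonempty := ⟨(0, x₀), by simp [hC, hx₀]⟩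
  -- minimum of |h| on C
  obtain ⟨p₀, hp₀C, hp₀min⟩ := hCcomp.exists_isMinOn hCne
    (continuous_norm.comp_continuousOn hc)
  set δ : ℝ := ‖h p₀‖ with hδ
  have hδpos : 0 < δ := by
    rw [hδ]
    exact norm_pos_iff.mpr (hnz p₀ hp₀C)
  have hδle : ∀ p ∈ C, δ ≤ ‖h p‖ := fun p hp => hp₀min hp
  -- uniform continuity
  have huc := hCcomp.uniformContinuousOn_of_continuous hc
  rw [Metric.uniformContinuousOn_iff] at huc
  obtain ⟨ε, hεpos, hε⟩ := huc δ hδpos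
  obtain ⟨N, hN⟩ := exists_nat_gt (1 / ε)
  have hNpos : 0 < (N:ℝ) := lt_trans (by positivity) hN
  have hNne : (N:ℝ) ≠ 0 := ne_of_gt hNpos
  have hstep : 1 / (N:ℝ) < ε := by
    rw [div_lt_iff₀ hNpos]
    have h2 := mul_lt_mul_of_pos_right hN hεpos
    rw [div_mul_cancel₀ _ (ne_of_gt hεpos)] at h2
    linarith
  -- cutoffs
  set c : ℕ → ℝ → ℝ := fun j t => min t (j / N) with hc_def
  have hcmem : ∀ j, ∀ t ∈ Set.Icc (0:ℝ) 1, c j t ∈ Set.Icc (0:ℝ) 1 := by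
    intro j t ht
    constructor
    · exact le_min ht.1 (by positivity)
    · exact le_trans (min_le_left _ _) ht.2
  have hcdiff : ∀ j : ℕ, ∀ t : ℝ, 0 ≤ c (j+1) t - c j t ∧ c (j+1) t - c j t ≤ 1 / N := by
    intro j t
    constructor
    · simp only [hc_def, sub_nonneg]
      apply min_le_min le_rfl
      gcongr
      exact_mod_cast j.le_succ
    · simp only [hc_def]
      have h1 : min t ((j+1 : ℕ) / N) ≤ min t (j / N) + 1 / N := by
        rcases le_total t ((j:ℝ)/N) with h | h
        · rw [min_eq_left h]
          calc min t ((j+1:ℕ)/N) ≤ t := min_le_left _ _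
          _ ≤ t + 1/N := by positivity |> fun hh => le_add_of_nonneg_right hh
        · rw [min_eq_right h]
          calc min t ((j+1:ℕ)/N) ≤ ((j+1:ℕ):ℝ)/N := min_le_right _ _
          _ = (j:ℝ)/N + 1/N := by push_cast; ring
      linarith
  -- the ratios
  set q : ℕ → ℝ × X → ℂ := fun j p => h (c (j+1) p.1, p.2) / h (c j p.1, p.2) with hq_def
  have hmemC : ∀ j, ∀ p ∈ C, (c j p.1, p.2) ∈ C := by
    rintro j ⟨t, x⟩ hp
    exact ⟨hcmem j t hp.1, hp.2⟩
  have hratio : ∀ j, ∀ p ∈ C, ‖q j p - 1‖ < 1 := by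
    rintro j ⟨t, x⟩ hp
    have h0 : h (c j t, x) ≠ 0 := hnz _ (hmemC j _ hp)
    have hdist : dist (h (c (j+1) t, x)) (h (c j t, x)) < δ := by
      apply hε _ (hmemC (j+1) _ hp) _ (hmemC j _ hp)
      rw [Prod.dist_eq]
      simp only [dist_self]
      refine max_lt ?_ hεpos
      have h1 := (hcdiff j t).1
      have h2 := (hcdiff j t).2
      rw [Real.dist_eq, _root_.abs_of_nonneg (by linarith)]
      linarith
    have habs : ‖h (c (j+1) t, x) - h (c j t, x)‖ < δ := by
      rwa [Complex.dist_eq] at hdist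
    have : q j (t, x) - 1 = (h (c (j+1) t, x) - h (c j t, x)) / h (c j t, x) := by
      simp only [hq_def]; rw [sub_div, div_self h0]
    rw [this, norm_div]
    rw [div_lt_one (norm_pos_iff.mpr h0)]
    exact lt_of_lt_of_le habs (hδle _ (hmemC j _ hp))
  have hqslit : ∀ j, ∀ p ∈ C, q j p ∈ Complex.slitPlane := by
    intro j p hp
    have := hratio j p hp
    have h1 : ‖q j p - 1‖ < 1 := this
    have := Complex.mem_slitPlane_of_norm_lt_one h1
    simpa using this
  have hqne : ∀ j, ∀ p ∈ C, q j p ≠ 0 := fun j p hp => Complex.slitPlane_ne_zero (hqslit j p hp)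
  have hqcont : ∀ j, ContinuousOn (q j) C := by
    intro j
    have hmap : ∀ j : ℕ, ContinuousOn (fun p : ℝ × X => h (c j p.1, p.2)) C := by
      intro j
      apply hc.comp
      · apply Continuous.continuousOn
        exact ((continuous_fst.min continuous_const)).prodMk continuous_snd
      · exact fun p hp => hmemC j p hp
    exact (hmap (j+1)).div (hmap j) (fun p hp => hnz _ (hmemC j p hp))
  -- definition of G
  set G : ℝ × X → ℂ := fun p => g₀ p.2 + ∑ j ∈ Finset.range N, Complex.log (q j p) with hG_def
  refine ⟨G, ?_, ?_, ?_⟩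
  · apply ContinuousOn.add
    · exact hg₀.comp continuous_snd.continuousOn (fun p hp => hp.2)
    · apply continuousOn_finset_sum
      intro j _
      exact (hqcont j).clog (fun p hp => hqslit j p hp)
  · intro x hx
    have hc0 : ∀ j : ℕ, c j (0:ℝ) = 0 := by
      intro j
      simp only [hc_def]
      exact min_eq_left (by positivity)
    simp only [hG_def, hq_def, hc0]
    simp [div_self (hnz (0,x) ⟨by simp, hx⟩)]
  · rintro ⟨t, x⟩ hp
    have hF : ∀ j ≤ N, h (c j t, x) ≠ 0 := fun j _ => hnz _ (hmemC j _ hp)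
    have hexp : Complex.exp (G (t, x)) =
        Complex.exp (g₀ x) * ∏ j ∈ Finset.range N, q j (t, x) := by
      rw [hG_def]
      simp only
      rw [Complex.exp_add, Complex.exp_sum]
      congr 1
      apply Finset.prod_congr rfl
      intro j _
      exact Complex.exp_log (hqne j _ hp)
    rw [hexp, prod_ratio (F := fun j => h (c j t, x)) hF]
    have hcN : c N t = t := min_eq_left (by
      rw [div_self hNne]; exact hp.1.2)
    have hc0 : c 0 t = 0 := by
      simp only [hc_def]
      push_cast
      rw [zero_div]
      exact min_eq_right hp.1.1
    rw [hcN, hc0, ← hg₀e x hp.2]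
    have h0 : h (0, x) ≠ 0 := hnz _ ⟨by simp, hp.2⟩
    field_simp


variable {n : ℕ}

def Sp (n : ℕ) : Set (Fin n → ℝ) := {x | ∑ j, x j ^ 2 = 1}

lemma sp_closed : IsClosed (Sp n) := by
  have : Continuous (fun x : Fin n → ℝ => ∑ j, x j ^ 2) := by
    apply continuous_finset_sum
    intro j _
    exact (continuous_apply j).pow 2
  exact isClosed_eq this continuous_const

lemma sp_sq_le {x : Fin n → ℝ} (hx : x ∈ Sp n) (j : Fin n) : x j ^ 2 ≤ 1 := by
  rw [← hx]
  exact Finset.single_le_sum (f := fun j => x j ^ 2) (fun i _ => sq_nonneg _) (Finset.mem_univ j)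

lemma sp_compact : IsCompact (Sp n) := by
  have hb : Sp n ⊆ Metric.closedBall 0 1 := by
    intro x hx
    rw [Metric.mem_closedBall, dist_zero_right]
    apply pi_norm_le_iff_of_nonneg zero_le_one |>.mpr
    intro j
    rw [Real.norm_eq_abs, ← Real.sqrt_one, ← Real.sqrt_sq_eq_abs]
    exact Real.sqrt_le_sqrt (sp_sq_le hx j)
  exact (isCompact_closedBall 0 1).of_isClosed_subset sp_closed hb

/-- Transfer from the Euclidean sphere. -/
lemma sp_eq_image :
    Sp n = (WithLp.equiv 2 (Fin n → ℝ)) '' (Metric.sphere (0 : EuclideanSpace ℝ (Fin n)) 1) := by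
  ext x
  constructor
  · intro hx
    refine ⟨(WithLp.equiv 2 (Fin n → ℝ)).symm x, ?_, rfl⟩
    rw [Metric.mem_sphere, dist_zero_right, EuclideanSpace.norm_eq]
    rw [show (∑ i, ‖((WithLp.equiv 2 (Fin n → ℝ)).symm x) i‖ ^ 2) = ∑ i, x i ^ 2 from
      Finset.sum_congr rfl fun i _ => by rw [Real.norm_eq_abs, _root_.sq_abs]; rfl]
    rw [show (∑ i, x i ^ 2) = 1 from hx]
    exact Real.sqrt_one
  · rintro ⟨y, hy, rfl⟩
    rw [Metric.mem_sphere, dist_zero_right, EuclideanSpace.norm_eq] at hy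
    simp only [Real.norm_eq_abs, _root_.sq_abs] at hy
    have h0 : (0:ℝ) ≤ ∑ i, y i ^ 2 := Finset.sum_nonneg fun i _ => sq_nonneg _
    have : ∑ i, y i ^ 2 = 1 := by
      have := congrArg (fun t => t ^ 2) hy
      simpa [Real.sq_sqrt h0] using this
    simpa [Sp] using this

lemma sp_preconnected (hn : 2 ≤ n) : IsPreconnected (Sp n) := by
  rw [sp_eq_image]
  apply IsPreconnected.image
  · apply isPreconnected_sphere
    rw [← Module.finrank_eq_rank, finrank_euclideanSpace_fin]
    exact_mod_cast lt_of_lt_of_le one_lt_two hn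
  · exact (PiLp.continuous_ofLp 2 (fun _ : Fin n => ℝ)).continuousOn

/-- The equator `{x ∈ Sp n | x i₀ = 0}` is preconnected when `3 ≤ n`. -/
lemma seam_preconnected (hn : 3 ≤ n) (i₀ : Fin n) :
    IsPreconnected (Sp n ∩ {x | x i₀ = 0}) := by
  set L : EuclideanSpace ℝ (Fin n) →ₗ[ℝ] ℝ :=
    (LinearMap.proj i₀).comp (WithLp.linearEquiv 2 ℝ (Fin n → ℝ)).toLinearMap with hL
  set H : Submodule ℝ (EuclideanSpace ℝ (Fin n)) := LinearMap.ker L with hH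
  have hLsurj : Function.Surjective L := by
    intro c
    refine ⟨(WithLp.linearEquiv 2 ℝ (Fin n → ℝ)).symm (fun j => if j = i₀ then c else 0), ?_⟩
    simp [hL]
  have hrank : 1 < Module.rank ℝ H := by
    have h1 : Module.finrank ℝ (LinearMap.range L) + Module.finrank ℝ H = n := by
      rw [hH]
      rw [LinearMap.finrank_range_add_finrank_ker L]
      exact finrank_euclideanSpace_fin
    have h2 : LinearMap.range L = ⊤ := LinearMap.range_eq_top.mpr hLsurj
    have h3 : Module.finrank ℝ (LinearMap.range L) = 1 := by
      rw [h2]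
      simp [Module.finrank_self]
    have h4 : Module.finrank ℝ H = n - 1 := by omega
    rw [← Module.finrank_eq_rank, h4]
    have : (2:ℕ) ≤ n - 1 := by omega
    exact_mod_cast lt_of_lt_of_le one_lt_two this
  have hpc : IsPathConnected (Metric.sphere (0 : H) 1) :=
    isPathConnected_sphere hrank 0 zero_le_one
  have himg : Sp n ∩ {x | x i₀ = 0} =
      (fun v : H => WithLp.equiv 2 (Fin n → ℝ) (v : EuclideanSpace ℝ (Fin n))) ''
        (Metric.sphere (0 : H) 1) := by
    ext x
    constructor
    · rintro ⟨hx1, hx2⟩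
      have hmem : ((WithLp.equiv 2 (Fin n → ℝ)).symm x) ∈ H := by
        rw [hH, LinearMap.mem_ker, hL]
        simpa using hx2
      refine ⟨⟨(WithLp.equiv 2 (Fin n → ℝ)).symm x, hmem⟩, ?_, rfl⟩
      rw [Metric.mem_sphere, dist_zero_right]
      have : ‖(WithLp.equiv 2 (Fin n → ℝ)).symm x‖ = 1 := by
        rw [EuclideanSpace.norm_eq]
        rw [show (∑ i, ‖((WithLp.equiv 2 (Fin n → ℝ)).symm x) i‖ ^ 2) = ∑ i, x i ^ 2 from
          Finset.sum_congr rfl fun i _ => by rw [Real.norm_eq_abs, _root_.sq_abs]; rfl]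
        rw [show (∑ i, x i ^ 2) = 1 from hx1]
        exact Real.sqrt_one
      rw [← this]
      rfl
    · rintro ⟨⟨v, hv⟩, hsph, rfl⟩
      rw [Metric.mem_sphere, dist_zero_right] at hsph
      have hnorm : ‖v‖ = 1 := hsph
      constructor
      · rw [EuclideanSpace.norm_eq] at hnorm
        simp only [Real.norm_eq_abs, _root_.sq_abs] at hnorm
        have h0 : (0:ℝ) ≤ ∑ i, v i ^ 2 := Finset.sum_nonneg fun i _ => sq_nonneg _
        have : ∑ i, v i ^ 2 = 1 := by
          have := congrArg (fun t => t ^ 2) hnorm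
          simpa [Real.sq_sqrt h0] using this
        simpa [Sp] using this
      · rw [hH, LinearMap.mem_ker, hL] at hv
        simpa using hv
  rw [himg]
  apply IsPreconnected.image hpc.isConnected.isPreconnected
  apply Continuous.continuousOn
  exact (PiLp.continuous_ofLp 2 (fun _ : Fin n => ℝ)).comp continuous_subtype_val


section Slog

variable {n : ℕ}

/-- Continuous logarithm on a closed cap of the sphere. -/
lemma cap_log (hn : 3 ≤ n) (i₀ : Fin n) {σ : ℝ} (hσ : σ^2 = 1)
    {f : (Fin n → ℝ) → ℂ} (hf : ContinuousOn f (Sp n))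
    (hnz : ∀ x ∈ Sp n, f x ≠ 0) :
    ∃ g : (Fin n → ℝ) → ℂ, ContinuousOn g (Sp n ∩ {x | 0 ≤ σ * x i₀}) ∧
      ∀ x ∈ Sp n ∩ {x | 0 ≤ σ * x i₀}, f x = Complex.exp (g x) := by
  classical
  set e : Fin n → ℝ := fun j => if j = i₀ then 1 else 0 with he_def
  have he2 : ∑ j, (e j)^2 = 1 := by
    rw [Finset.sum_eq_single i₀]
    · simp [he_def]
    · intro j _ hj; simp [he_def, hj]
    · intro hj; exact absurd (Finset.mem_univ i₀) hj
  have hxe : ∀ x : Fin n → ℝ, ∑ j, x j * e j = x i₀ := by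
    intro x
    rw [Finset.sum_eq_single i₀]
    · simp [he_def]
    · intro j _ hj; simp [he_def, hj]
    · intro hj; exact absurd (Finset.mem_univ i₀) hj
  set w : ℝ → (Fin n → ℝ) → (Fin n → ℝ) := fun s x j => (1-s) * x j + s * σ * e j with hw_def
  set nsq : ℝ → (Fin n → ℝ) → ℝ := fun s x => ∑ j, (w s x j)^2 with hnsq_def
  have hsum : ∀ s x, x ∈ Sp n → nsq s x = (1-s)^2 + 2*s*(1-s)*σ*(x i₀) + s^2 := by
    intro s x hx
    have hx' : ∑ j, x j ^ 2 = 1 := hx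
    calc nsq s x
        = ∑ j, ((1-s)^2*(x j)^2 + (2*s*(1-s)*σ)*(x j * e j) + (s^2*σ^2)*(e j)^2) :=
          Finset.sum_congr rfl (fun j _ => by simp only [hw_def]; ring)
      _ = (1-s)^2 * ∑ j, x j^2 + (2*s*(1-s)*σ) * ∑ j, x j * e j
            + (s^2*σ^2) * ∑ j, (e j)^2 := by
          rw [Finset.sum_add_distrib, Finset.sum_add_distrib,
            ← Finset.mul_sum, ← Finset.mul_sum, ← Finset.mul_sum]
      _ = (1-s)^2 + 2*s*(1-s)*σ*(x i₀) + s^2 := by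
          rw [hx', hxe, he2, hσ]; ring
  set K : Set (Fin n → ℝ) := Sp n ∩ {x | 0 ≤ σ * x i₀} with hK_def
  have hnsq_pos : ∀ s ∈ Set.Icc (0:ℝ) 1, ∀ x ∈ K, (1:ℝ)/2 ≤ nsq s x := by
    rintro s hs x ⟨hx1, hx2⟩
    rw [hsum s x hx1]
    have hcross : 0 ≤ 2*s*(1-s)*σ*(x i₀) := by
      have hpx : (0:ℝ) ≤ σ * x i₀ := hx2
      have h1 : (0:ℝ) ≤ s := hs.1
      have h2 : (0:ℝ) ≤ 1 - s := by linarith [hs.2]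
      have h4 : (0:ℝ) ≤ 2*s*(1-s)*(σ*(x i₀)) :=
        mul_nonneg (mul_nonneg (mul_nonneg (by norm_num) h1) h2) hpx
      calc (0:ℝ) ≤ 2*s*(1-s)*(σ*(x i₀)) := h4
        _ = 2*s*(1-s)*σ*(x i₀) := by ring
    nlinarith [sq_nonneg (1 - 2*s)]
  set ctr : ℝ → (Fin n → ℝ) → (Fin n → ℝ) :=
    fun s x j => w s x j / Real.sqrt (nsq s x) with hctr_def
  have hctr_mem : ∀ s ∈ Set.Icc (0:ℝ) 1, ∀ x ∈ K, ctr s x ∈ Sp n := by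
    intro s hs x hx
    have hpos : 0 < nsq s x := lt_of_lt_of_le (by norm_num) (hnsq_pos s hs x hx)
    show ∑ j, (ctr s x j)^2 = 1
    simp only [hctr_def, div_pow]
    rw [← Finset.sum_div]
    rw [Real.sq_sqrt (le_of_lt hpos)]
    exact div_self (ne_of_gt hpos)
  have hctr0 : ∀ x ∈ K, ctr 0 x = x := by
    rintro x ⟨hx1, _⟩
    funext j
    have : nsq 0 x = 1 := by rw [hsum 0 x hx1]; ring
    simp [hctr_def, hw_def, this]
  have hemem : (fun j => σ * e j) ∈ Sp n := by
    show ∑ j, (σ * e j)^2 = 1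
    calc ∑ j, (σ * e j)^2 = ∑ j, σ^2 * (e j)^2 := Finset.sum_congr rfl (fun j _ => by ring)
    _ = σ^2 * ∑ j, (e j)^2 := by rw [← Finset.mul_sum]
    _ = 1 := by rw [he2, hσ]; ring
  have hctr1 : ∀ x ∈ K, ctr 1 x = fun j => σ * e j := by
    rintro x ⟨hx1, _⟩
    funext j
    have : nsq 1 x = 1 := by rw [hsum 1 x hx1]; ring
    simp [hctr_def, hw_def, this]
  -- the homotopy
  set h : ℝ × (Fin n → ℝ) → ℂ := fun p => f (ctr (1 - p.1) p.2) with hh_def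
  have hKcomp : IsCompact K := by
    apply sp_compact.inter_right
    exact isClosed_le continuous_const (continuous_const.mul (continuous_apply i₀))
  have hmaps : ∀ p ∈ Set.Icc (0:ℝ) 1 ×ˢ K, ctr (1 - p.1) p.2 ∈ Sp n := by
    rintro ⟨s, x⟩ hp
    apply hctr_mem _ _ _ hp.2
    constructor
    · linarith [hp.1.2]
    · linarith [hp.1.1]
  have hwcont : ∀ j, Continuous (fun p : ℝ × (Fin n → ℝ) => w (1 - p.1) p.2 j) := by
    intro j
    simp only [hw_def]
    have hs : Continuous (fun p : ℝ × (Fin n → ℝ) => 1 - p.1) :=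
      continuous_const.sub continuous_fst
    exact ((continuous_const.sub hs).mul ((continuous_apply j).comp continuous_snd)).add
      ((hs.mul continuous_const).mul continuous_const)
  have hctrcont : ContinuousOn (fun p : ℝ × (Fin n → ℝ) => ctr (1 - p.1) p.2)
      (Set.Icc (0:ℝ) 1 ×ˢ K) := by
    apply continuousOn_pi.mpr
    intro j
    simp only [hctr_def]
    apply ContinuousOn.div
    · exact (hwcont j).continuousOn
    · apply Continuous.continuousOn
      apply Real.continuous_sqrt.comp
      simp only [hnsq_def]
      exact continuous_finset_sum _ (fun i _ => (hwcont i).pow 2)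
    · rintro ⟨s, x⟩ hp
      have h1 : 1 - s ∈ Set.Icc (0:ℝ) 1 := ⟨by linarith [hp.1.2], by linarith [hp.1.1]⟩
      have := hnsq_pos (1-s) h1 x hp.2
      positivity
  have hhcont : ContinuousOn h (Set.Icc (0:ℝ) 1 ×ˢ K) := by
    apply hf.comp hctrcont
    exact fun p hp => hmaps p hp
  have hhnz : ∀ p ∈ Set.Icc (0:ℝ) 1 ×ˢ K, h p ≠ 0 := fun p hp => hnz _ (hmaps p hp)
  have hh0 : ∀ x ∈ K, h (0, x) = Complex.exp (Complex.log (f (fun j => σ * e j))) := by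
    intro x hx
    rw [Complex.exp_log (hnz _ hemem)]
    simp only [hh_def]
    rw [show (1:ℝ) - 0 = 1 by ring, hctr1 x hx]
  obtain ⟨G, hGc, hG0, hGe⟩ := logh hKcomp hhcont hhnz
    (continuousOn_const (c := Complex.log (f (fun j => σ * e j)))) hh0
  refine ⟨fun x => G (1, x), ?_, ?_⟩
  · apply hGc.comp
    · exact (continuous_const.prodMk continuous_id).continuousOn
    · intro x hx
      exact ⟨by norm_num, hx⟩
  · intro x hx
    have := hGe (1, x) ⟨by norm_num, hx⟩
    rw [← this]
    simp only [hh_def]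
    rw [show (1:ℝ) - 1 = 0 by ring, hctr0 x hx]

/-- Continuous logarithm on the whole sphere (n ≥ 3). -/
lemma slog (hn : 3 ≤ n) {f : (Fin n → ℝ) → ℂ} (hf : ContinuousOn f (Sp n))
    (hnz : ∀ x ∈ Sp n, f x ≠ 0) :
    ∃ g : (Fin n → ℝ) → ℂ, ContinuousOn g (Sp n) ∧ ∀ x ∈ Sp n, f x = Complex.exp (g x) := by
  classical
  set i₀ : Fin n := ⟨0, by omega⟩ with hi₀
  set i₁ : Fin n := ⟨1, by omega⟩ with hi₁
  obtain ⟨gA, hgAc, hgAe⟩ := cap_log hn i₀ (σ := -1) (by norm_num) hf hnz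
  obtain ⟨gB, hgBc, hgBe⟩ := cap_log hn i₀ (σ := 1) (by norm_num) hf hnz
  have hsetA : {x : Fin n → ℝ | 0 ≤ (-1:ℝ) * x i₀} = {x | x i₀ ≤ 0} := by
    ext x
    simp only [Set.mem_setOf_eq]
    constructor <;> intro h <;> linarith
  have hsetB : {x : Fin n → ℝ | 0 ≤ (1:ℝ) * x i₀} = {x | 0 ≤ x i₀} := by
    ext x; simp
  rw [hsetA] at hgAc hgAe
  rw [hsetB] at hgBc hgBe
  -- seam
  set E : Set (Fin n → ℝ) := Sp n ∩ {x | x i₀ = 0} with hE_def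
  have hEsubA : E ⊆ Sp n ∩ {x | x i₀ ≤ 0} := fun x hx => ⟨hx.1, le_of_eq hx.2⟩
  have hEsubB : E ⊆ Sp n ∩ {x | 0 ≤ x i₀} := fun x hx => ⟨hx.1, ge_of_eq hx.2⟩
  set d : (Fin n → ℝ) → ℂ := fun x => gA x - gB x with hd_def
  have hdc : ContinuousOn d E := (hgAc.mono hEsubA).sub (hgBc.mono hEsubB)
  have hd1 : ∀ x ∈ E, Complex.exp (d x) = 1 := by
    intro x hx
    simp only [hd_def]
    rw [Complex.exp_sub, ← hgAe x (hEsubA hx), ← hgBe x (hEsubB hx)]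
    exact div_self (hnz x hx.1)
  have hdconst := const_of_exp_eq_one (seam_preconnected hn i₀) hdc hd1
  -- basepoint
  set xb : Fin n → ℝ := fun j => if j = i₁ then 1 else 0 with hxb_def
  have hxbE : xb ∈ E := by
    constructor
    · show ∑ j, (xb j)^2 = 1
      rw [Finset.sum_eq_single i₁]
      · simp [hxb_def]
      · intro j _ hj; simp [hxb_def, hj]
      · intro hj; exact absurd (Finset.mem_univ i₁) hj
    · show xb i₀ = 0
      have : i₀ ≠ i₁ := by
        simp only [hi₀, hi₁, ne_eq, Fin.mk.injEq]
        omega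
      simp [hxb_def, this]
  set c₀ : ℂ := gA xb - gB xb with hc₀_def
  refine ⟨fun x => if x i₀ ≤ 0 then gA x else gB x + c₀, ?_, ?_⟩
  · apply paste_if_le (continuous_apply i₀) hgAc (hgBc.add continuousOn_const)
    intro x hx hx0
    have : d x = d xb := hdconst x ⟨hx, hx0⟩ xb hxbE
    simp only [hd_def] at this
    simp only [Pi.add_apply]
    linear_combination this
  · intro x hx
    by_cases h : x i₀ ≤ 0
    · simp only [if_pos h]
      exact hgAe x ⟨hx, h⟩
    · simp only [if_neg h]
      have hx0 : 0 ≤ x i₀ := le_of_lt (not_le.mp h)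
      rw [Complex.exp_add, ← hgBe x ⟨hx, hx0⟩]
      have hc1 : Complex.exp c₀ = 1 := by
        simp only [hc₀_def]
        rw [Complex.exp_sub, ← hgAe xb (hEsubA hxbE), ← hgBe xb (hEsubB hxbE)]
        exact div_self (hnz xb hxbE.1)
      rw [hc1, mul_one]

end Slog

/-- The Lie sphere in ℂⁿ: all points of the form e^{iθ}·x with x ∈ ℝⁿ, ∑ xⱼ² = 1. -/
def LieSphere (n : ℕ) : Set (Fin n → ℂ) :=
  {z | ∃ (θ : ℝ) (x : Fin n → ℝ), (∑ j, x j ^ 2) = 1 ∧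
    z = fun j => Complex.exp (Complex.I * (θ : ℂ)) * (x j : ℂ)}

theorem stmt_11 (n : ℕ) (hn : 3 ≤ n)
    (φ : LieSphere n → ℂ) (hφ : Continuous φ) (hnv : ∀ z, φ z ≠ 0) :
    ∃! k : ℤ, ∃ ψ : LieSphere n → ℂ, Continuous ψ ∧
      ∀ z : LieSphere n, φ z = (∑ j, ((z : Fin n → ℂ) j) ^ 2) ^ k * Complex.exp (ψ z) := by
  classical
  have hπpos := Real.pi_pos
  have hπne := Real.pi_ne_zero
  -- parametrization
  set M : ℝ × (Fin n → ℝ) → (Fin n → ℂ) :=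
    fun p => fun j => Complex.exp (Complex.I * (p.1 : ℂ)) * ((p.2 j : ℝ) : ℂ) with hM_def
  have memS : ∀ (θ : ℝ) (x : Fin n → ℝ), x ∈ Sp n → M (θ, x) ∈ LieSphere n :=
    fun θ x hx => ⟨θ, x, hx, rfl⟩
  have hMcont : Continuous M := by
    apply continuous_pi
    intro j
    exact (Complex.continuous_exp.comp
        (continuous_const.mul (Complex.continuous_ofReal.comp continuous_fst))).mul
      (Complex.continuous_ofReal.comp ((continuous_apply j).comp continuous_snd))
  -- extension of φ
  set φ' : (Fin n → ℂ) → ℂ := fun w => if h : w ∈ LieSphere n then φ ⟨w, h⟩ else 1 with hφ'_def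
  have hφ'c : ContinuousOn φ' (LieSphere n) := by
    rw [continuousOn_iff_continuous_restrict]
    have : (LieSphere n).domRestrict φ' = φ := by
      funext z
      simp only [Set.domRestrict_apply, hφ'_def, dif_pos z.2]
    rw [this]; exact hφ
  set F : ℝ × (Fin n → ℝ) → ℂ := fun p => φ' (M p) with hF_def
  set U : Set (ℝ × (Fin n → ℝ)) := {p | p.2 ∈ Sp n} with hU_def
  have hFcU : ContinuousOn F U :=
    hφ'c.comp hMcont.continuousOn (fun p hp => memS p.1 p.2 hp)
  have hFval : ∀ (θ : ℝ) (x : Fin n → ℝ) (hx : x ∈ Sp n),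
      F (θ, x) = φ ⟨M (θ, x), memS θ x hx⟩ := by
    intro θ x hx
    simp only [hF_def, hφ'_def, dif_pos (memS θ x hx)]
  have hFnz : ∀ (θ : ℝ) (x : Fin n → ℝ), x ∈ Sp n → F (θ, x) ≠ 0 := by
    intro θ x hx
    rw [hFval θ x hx]
    exact hnv _
  -- the generic norm along M
  have hNval : ∀ (θ : ℝ) (x : Fin n → ℝ), x ∈ Sp n →
      (∑ j, (M (θ, x) j) ^ 2) = Complex.exp (2 * Complex.I * (θ:ℂ)) := by
    intro θ x hx
    have hx' : (∑ j, ((x j : ℂ)) ^ 2) = 1 := by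
      have : ((∑ j, (x j) ^ 2 : ℝ) : ℂ) = ∑ j, ((x j : ℂ)) ^ 2 := by push_cast; rfl
      rw [← this, show (∑ j, (x j)^2 : ℝ) = 1 from hx, Complex.ofReal_one]
    calc (∑ j, (M (θ, x) j) ^ 2)
        = ∑ j, Complex.exp (Complex.I * (θ:ℂ)) ^ 2 * ((x j : ℂ)) ^ 2 :=
          Finset.sum_congr rfl (fun j _ => by simp only [hM_def]; ring)
      _ = Complex.exp (Complex.I * (θ:ℂ)) ^ 2 * ∑ j, ((x j : ℂ)) ^ 2 := by
          rw [← Finset.mul_sum]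
      _ = Complex.exp (Complex.I * (θ:ℂ)) ^ 2 := by rw [hx', mul_one]
      _ = Complex.exp (2 * Complex.I * (θ:ℂ)) := by
          rw [← Complex.exp_nat_mul]
          ring_nf
  -- log at time 0 on the sphere
  set f₀ : (Fin n → ℝ) → ℂ := fun x => F (0, x) with hf₀_def
  have hf₀c : ContinuousOn f₀ (Sp n) := by
    apply hFcU.comp (Continuous.continuousOn
      ((continuous_const.prodMk continuous_id : Continuous fun x : Fin n → ℝ => ((0:ℝ), x))))
    intro x hx
    exact hx
  obtain ⟨g₀, hg₀c, hg₀e⟩ := slog hn hf₀c (fun x hx => hFnz 0 x hx)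
  -- global log over [0,1] × sphere
  set h : ℝ × (Fin n → ℝ) → ℂ := fun p => F (Real.pi * p.1, p.2) with hh_def
  have hhc : ContinuousOn h (Set.Icc (0:ℝ) 1 ×ˢ Sp n) := by
    apply hFcU.comp (Continuous.continuousOn
      ((continuous_const.mul continuous_fst).prodMk continuous_snd))
    rintro ⟨t, x⟩ hp
    exact hp.2
  have hhnz : ∀ p ∈ Set.Icc (0:ℝ) 1 ×ˢ Sp n, h p ≠ 0 := by
    rintro ⟨t, x⟩ hp
    exact hFnz _ _ hp.2
  have hh0 : ∀ x ∈ Sp n, h (0, x) = Complex.exp (g₀ x) := by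
    intro x hx
    simp only [hh_def, mul_zero]
    exact hg₀e x hx
  obtain ⟨G, hGc, hG0, hGe⟩ := logh sp_compact hhc hhnz hg₀c hh0
  -- reparametrized log over [0,π] × sphere
  set G' : ℝ × (Fin n → ℝ) → ℂ := fun p => G (p.1 / Real.pi, p.2) with hG'_def
  set D : Set (ℝ × (Fin n → ℝ)) := Set.Icc (0:ℝ) Real.pi ×ˢ Sp n with hD_def
  have hDmap : ∀ p ∈ D, (p.1 / Real.pi, p.2) ∈ Set.Icc (0:ℝ) 1 ×ˢ Sp n := by
    rintro ⟨t, x⟩ hp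
    refine ⟨⟨div_nonneg hp.1.1 (le_of_lt hπpos), ?_⟩, hp.2⟩
    rw [div_le_one hπpos]
    exact hp.1.2
  have hG'c : ContinuousOn G' D := by
    apply hGc.comp (Continuous.continuousOn
      ((continuous_fst.div_const _).prodMk continuous_snd))
    exact hDmap
  have hG'e : ∀ p ∈ D, F p = Complex.exp (G' p) := by
    rintro ⟨t, x⟩ hp
    have := hGe _ (hDmap _ hp)
    simp only [hh_def] at this
    rw [show Real.pi * (t / Real.pi) = t by field_simp] at this
    exact this
  -- negation preserves the sphere
  have hneg : ∀ x : Fin n → ℝ, x ∈ Sp n → -x ∈ Sp n := by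
    intro x hx
    show ∑ j, ((-x) j) ^ 2 = 1
    calc ∑ j, ((-x) j) ^ 2 = ∑ j, (x j) ^ 2 :=
      Finset.sum_congr rfl (fun j _ => by rw [Pi.neg_apply, neg_sq])
    _ = 1 := hx
  -- the winding integer
  set d : (Fin n → ℝ) → ℂ := fun x => G' (Real.pi, -x) - G' (0, x) with hd_def
  have hmem1 : ∀ x ∈ Sp n, ((Real.pi : ℝ), -x) ∈ D := by
    intro x hx
    exact ⟨⟨le_of_lt hπpos, le_refl _⟩, hneg x hx⟩
  have hmem0 : ∀ x ∈ Sp n, ((0:ℝ), x) ∈ D := by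
    intro x hx
    exact ⟨⟨le_refl _, le_of_lt hπpos⟩, hx⟩
  have hdc : ContinuousOn d (Sp n) := by
    apply ContinuousOn.sub
    · exact hG'c.comp (Continuous.continuousOn
        (continuous_const.prodMk continuous_neg)) hmem1
    · exact hG'c.comp (Continuous.continuousOn
        (continuous_const.prodMk continuous_id)) hmem0
  have hMflip : ∀ x : Fin n → ℝ, M (Real.pi, -x) = M (0, x) := by
    intro x
    funext j
    simp only [hM_def]
    rw [show (Complex.I * ((0:ℝ):ℂ)) = 0 by simp, Complex.exp_zero,
      show (Complex.I * ((Real.pi:ℝ):ℂ)) = (Real.pi:ℂ) * Complex.I by ring,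
      Complex.exp_pi_mul_I]
    rw [Pi.neg_apply]
    push_cast
    ring
  have hd1 : ∀ x ∈ Sp n, Complex.exp (d x) = 1 := by
    intro x hx
    simp only [hd_def]
    rw [Complex.exp_sub, ← hG'e _ (hmem1 x hx), ← hG'e _ (hmem0 x hx)]
    have : F (Real.pi, -x) = F (0, x) := by
      simp only [hF_def]
      rw [hMflip]
    rw [this]
    exact div_self (hFnz 0 x hx)
  have hdconst := const_of_exp_eq_one (sp_preconnected (by omega)) hdc hd1
  -- basepoint
  set xb : Fin n → ℝ := fun j => if j = (⟨0, by omega⟩ : Fin n) then 1 else 0 with hxb_def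
  have hxb : xb ∈ Sp n := by
    show ∑ j, (xb j) ^ 2 = 1
    rw [Finset.sum_eq_single (⟨0, by omega⟩ : Fin n)]
    · simp [hxb_def]
    · intro j _ hj; simp [hxb_def, hj]
    · intro hj; exact absurd (Finset.mem_univ _) hj
  obtain ⟨k, hk⟩ := Complex.exp_eq_one_iff.mp (hd1 xb hxb)
  have hdval : ∀ x ∈ Sp n, d x = k * (2 * Real.pi * Complex.I) := by
    intro x hx
    rw [hdconst x hx xb hxb, hk]
  -- the candidate log on D
  set Ψ : ℝ × (Fin n → ℝ) → ℂ := fun p => G' p - k * (2 * Complex.I * (p.1:ℂ)) with hΨ_def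
  have hΨflip : ∀ x ∈ Sp n, Ψ (Real.pi, -x) = Ψ (0, x) := by
    intro x hx
    have hd' := hdval x hx
    simp only [hd_def] at hd'
    simp only [hΨ_def]
    rw [show (((0:ℝ)):ℂ) = 0 by simp]
    push_cast
    linear_combination hd'
  -- compatibility
  have hcompat : ∀ p q : ℝ × (Fin n → ℝ), p ∈ D → q ∈ D → M p = M q → Ψ p = Ψ q := by
    rintro ⟨θ, x⟩ ⟨θ', x'⟩ hp hq hMeq
    have hθ := hp.1
    have hθ' := hq.1
    have hx : x ∈ Sp n := hp.2
    have hx' : x' ∈ Sp n := hq.2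
    have hj : ∀ j, Complex.exp (Complex.I * (θ:ℂ)) * ((x j : ℂ)) =
        Complex.exp (Complex.I * (θ':ℂ)) * ((x' j : ℂ)) := by
      intro j
      exact congrFun hMeq j
    have hNeq : Complex.exp (2 * Complex.I * (θ:ℂ)) = Complex.exp (2 * Complex.I * (θ':ℂ)) := by
      rw [← hNval θ x hx, ← hNval θ' x' hx', hMeq]
    obtain ⟨m, hm⟩ := Complex.exp_eq_exp_iff_exists_int.mp hNeq
    have hθeq : θ = θ' + m * Real.pi := by
      have h2 : ((θ - θ' - m * Real.pi : ℝ) : ℂ) * (2 * Complex.I) = 0 := by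
        push_cast
        linear_combination hm
      rcases mul_eq_zero.mp h2 with h3 | h3
      · have : (θ - θ' - m * Real.pi : ℝ) = 0 := by exact_mod_cast h3
        linarith
      · exfalso
        apply Complex.I_ne_zero
        have : (2:ℂ) ≠ 0 := by norm_num
        exact (mul_eq_zero.mp h3).resolve_left this
    have hb1 : (-1:ℤ) ≤ m := by
      by_contra hcon
      push_neg at hcon
      have hcon' : (m:ℝ) < -1 := by exact_mod_cast hcon
      have h7 := mul_lt_mul_of_pos_right hcon' hπpos
      have := hθ.1
      have := hθ'.2
      linarith
    have hb2 : m ≤ 1 := by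
      by_contra hcon
      push_neg at hcon
      have hcon' : (1:ℝ) < m := by exact_mod_cast hcon
      have h7 := mul_lt_mul_of_pos_right hcon' hπpos
      have := hθ.2
      have := hθ'.1
      linarith
    have hexpne : Complex.exp (Complex.I * (θ':ℂ)) ≠ 0 := Complex.exp_ne_zero _
    interval_cases m
    · -- m = -1 : θ' = θ + π, θ = 0, θ' = π, x' = -x
      push_cast at hθeq
      have hθ0 : θ = 0 ∧ θ' = Real.pi := by
        constructor <;> linarith [hθ.1, hθ.2, hθ'.1, hθ'.2]
      obtain ⟨rfl, rfl⟩ := hθ0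
      have hx'eq : x' = -x := by
        funext j
        have := hj j
        rw [show (Complex.I * ((0:ℝ):ℂ)) = 0 by simp, Complex.exp_zero,
          show (Complex.I * ((Real.pi:ℝ):ℂ)) = (Real.pi:ℂ) * Complex.I by ring,
          Complex.exp_pi_mul_I] at this
        have h4 : ((x' j : ℝ) : ℂ) = ((- x j : ℝ) : ℂ) := by push_cast; linear_combination this
        have : (x' j : ℝ) = - x j := by exact_mod_cast h4
        simpa [Pi.neg_apply] using this
      rw [hx'eq]
      exact (hΨflip x hx).symm
    · -- m = 0
      push_cast at hθeq
      have hθθ' : θ = θ' := by linarith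
      subst hθθ'
      have hxx' : x = x' := by
        funext j
        have := hj j
        have h4 : ((x j : ℝ) : ℂ) = ((x' j : ℝ) : ℂ) :=
          mul_left_cancel₀ hexpne this
        exact_mod_cast h4
      rw [hxx']
    · -- m = 1 : θ = θ' + π ⇒ θ' = 0, θ = π, x = -x'... x' = -x? here x j relation
      push_cast at hθeq
      have hθ0 : θ' = 0 ∧ θ = Real.pi := by
        constructor <;> linarith [hθ.1, hθ.2, hθ'.1, hθ'.2]
      obtain ⟨rfl, rfl⟩ := hθ0
      have hxeq : x = -x' := by
        funext j
        have := hj j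
        rw [show (Complex.I * ((0:ℝ):ℂ)) = 0 by simp, Complex.exp_zero,
          show (Complex.I * ((Real.pi:ℝ):ℂ)) = (Real.pi:ℂ) * Complex.I by ring,
          Complex.exp_pi_mul_I] at this
        have h4 : ((x j : ℝ) : ℂ) = ((- x' j : ℝ) : ℂ) := by push_cast; linear_combination -this
        have : (x j : ℝ) = - x' j := by exact_mod_cast h4
        simpa [Pi.neg_apply] using this
      rw [hxeq]
      exact hΨflip x' hx'
  -- the quotient map
  have hDcomp : IsCompact D := isCompact_Icc.prod sp_compact
  haveI : CompactSpace D := isCompact_iff_compactSpace.mp hDcomp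
  set qm : D → LieSphere n :=
    fun p => ⟨M p.1, memS p.1.1 p.1.2 p.2.2⟩ with hqm_def
  have hqmc : Continuous qm :=
    Continuous.subtype_mk (hMcont.comp continuous_subtype_val) _
  have hsurj : Function.Surjective qm := by
    rintro ⟨z, θ, x, hx, rfl⟩
    set Kf : ℤ := ⌊θ / Real.pi⌋ with hKf
    set θ' : ℝ := θ - Kf * Real.pi with hθ'
    set x' : Fin n → ℝ := fun j => (-1:ℝ) ^ Kf * x j with hx'
    have hsq : ((-1:ℝ) ^ Kf) ^ 2 = 1 := by
      rcases Int.even_or_odd Kf with hpar | hpar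
      · rw [hpar.neg_one_zpow]; norm_num
      · rw [hpar.neg_one_zpow]; norm_num
    have hx'Sp : x' ∈ Sp n := by
      show ∑ j, (x' j) ^ 2 = 1
      calc ∑ j, (x' j) ^ 2 = ∑ j, ((-1:ℝ) ^ Kf) ^ 2 * (x j) ^ 2 :=
        Finset.sum_congr rfl (fun j _ => by simp only [hx']; ring)
      _ = ((-1:ℝ) ^ Kf) ^ 2 * ∑ j, (x j) ^ 2 := by rw [← Finset.mul_sum]
      _ = 1 := by rw [hsq, show (∑ j, (x j)^2 : ℝ) = 1 from hx, mul_one]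
    have hfl : ((Kf:ℤ):ℝ) ≤ θ / Real.pi := by rw [hKf]; exact Int.floor_le _
    have hfu : θ / Real.pi < ((Kf:ℤ):ℝ) + 1 := by rw [hKf]; exact Int.lt_floor_add_one _
    have h5 : (Kf:ℝ) * Real.pi ≤ θ := by
      have h7 := mul_le_mul_of_nonneg_right hfl (le_of_lt hπpos)
      rwa [div_mul_cancel₀ _ hπne] at h7
    have h6 : θ < ((Kf:ℝ) + 1) * Real.pi := by
      have h7 := mul_lt_mul_of_pos_right hfu hπpos
      rwa [div_mul_cancel₀ _ hπne] at h7
    have hθ'mem : θ' ∈ Set.Icc (0:ℝ) Real.pi :=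
      ⟨by rw [hθ']; linarith, by rw [hθ']; nlinarith⟩
    have hMeq : M (θ', x') = M (θ, x) := by
      funext j
      simp only [hM_def, hx']
      have hθval : (θ:ℂ) = (θ':ℂ) + (Kf:ℂ) * (Real.pi:ℂ) := by
        rw [hθ']; push_cast; ring
      rw [hθval, show Complex.I * ((θ':ℂ) + (Kf:ℂ) * (Real.pi:ℂ)) =
        Complex.I * (θ':ℂ) + (Kf:ℂ) * ((Real.pi:ℂ) * Complex.I) by ring,
        Complex.exp_add, Complex.exp_int_mul, Complex.exp_pi_mul_I]
      push_cast
      ring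
    exact ⟨⟨(θ', x'), ⟨hθ'mem, hx'Sp⟩⟩, Subtype.ext hMeq⟩
  have hquot : Topology.IsQuotientMap qm := Topology.IsQuotientMap.of_surjective_continuous hsurj hqmc
  -- descend Ψ
  set ψ : LieSphere n → ℂ := fun z => Ψ (Classical.choose (hsurj z)).1 with hψ_def
  have hψq : ∀ p : D, ψ (qm p) = Ψ p.1 := by
    intro p
    have hspec := Classical.choose_spec (hsurj (qm p))
    have hMeq : M (Classical.choose (hsurj (qm p))).1 = M p.1 :=
      congrArg Subtype.val hspec
    exact hcompat _ _ (Classical.choose (hsurj (qm p))).2 p.2 hMeq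
  have hΨc : ContinuousOn Ψ D := by
    apply hG'c.sub
    apply Continuous.continuousOn
    exact continuous_const.mul
      (continuous_const.mul (Complex.continuous_ofReal.comp continuous_fst))
  have hψc : Continuous ψ := by
    rw [hquot.continuous_iff]
    have : ψ ∘ qm = D.restrict Ψ := funext fun p => hψq p
    rw [this]
    exact continuousOn_iff_continuous_restrict.mp hΨc
  -- the main identity
  have hid : ∀ z : LieSphere n,
      φ z = (∑ j, ((z : Fin n → ℂ) j) ^ 2) ^ k * Complex.exp (ψ z) := by
    intro z
    set p := Classical.choose (hsurj z) with hp_def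
    have hspec : qm p = z := Classical.choose_spec (hsurj z)
    have hzval : (z : Fin n → ℂ) = M p.1 := by rw [← hspec]
    have hpd : p.1 ∈ D := p.2
    have hφz : φ z = Complex.exp (G' p.1) := by
      rw [← hspec]
      have : φ (qm p) = F p.1 := by
        rw [hFval p.1.1 p.1.2 (Set.mem_prod.mp hpd).2]
      rw [this]
      exact hG'e p.1 hpd
    have hNz : (∑ j, ((z : Fin n → ℂ) j) ^ 2) = Complex.exp (2 * Complex.I * (p.1.1:ℂ)) := by
      rw [hzval]
      exact hNval p.1.1 p.1.2 (Set.mem_prod.mp hpd).2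
    have hψz : ψ z = Ψ p.1 := rfl
    rw [hφz, hNz, hψz]
    rw [← Complex.exp_int_mul, ← Complex.exp_add]
    congr 1
    simp only [hΨ_def]
    ring
  refine ⟨k, ⟨ψ, hψc, hid⟩, ?_⟩
  rintro k' ⟨ψ', hψ'c, hid'⟩
  -- uniqueness
  set γ : ℝ → LieSphere n := fun θ => ⟨M (θ, xb), memS θ xb hxb⟩ with hγ_def
  have hγc : Continuous γ :=
    Continuous.subtype_mk (hMcont.comp (continuous_id.prodMk continuous_const)) _
  set u : ℝ → ℂ := fun θ =>
    ((k':ℂ) * (2 * Complex.I * (θ:ℂ)) + ψ' (γ θ)) -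
    ((k:ℂ) * (2 * Complex.I * (θ:ℂ)) + ψ (γ θ)) with hu_def
  have huc : Continuous u := by
    apply Continuous.sub
    · exact (continuous_const.mul ((continuous_const.mul
        (Complex.continuous_ofReal)))).add (hψ'c.comp hγc)
    · exact (continuous_const.mul ((continuous_const.mul
        (Complex.continuous_ofReal)))).add (hψc.comp hγc)
  have hu1 : ∀ θ : ℝ, Complex.exp (u θ) = 1 := by
    intro θ
    have hN : (∑ j, (((γ θ) : Fin n → ℂ) j) ^ 2) = Complex.exp (2 * Complex.I * (θ:ℂ)) :=
      hNval θ xb hxb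
    have h1 := hid (γ θ)
    have h2 := hid' (γ θ)
    rw [hN] at h1 h2
    rw [← Complex.exp_int_mul, ← Complex.exp_add] at h1 h2
    simp only [hu_def]
    rw [Complex.exp_sub, ← h1, ← h2]
    exact div_self (hnv _)
  have huconst := const_of_exp_eq_one isPreconnected_univ huc.continuousOn
    (fun θ _ => hu1 θ)
  have hγper : γ (2 * Real.pi) = γ 0 := by
    apply Subtype.ext
    show M (2 * Real.pi, xb) = M (0, xb)
    funext j
    simp only [hM_def]
    rw [show (Complex.I * ((0:ℝ):ℂ)) = 0 by simp, Complex.exp_zero,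
      show (Complex.I * (((2 * Real.pi :ℝ)):ℂ)) = 2 * (Real.pi:ℂ) * Complex.I by push_cast; ring,
      Complex.exp_two_pi_mul_I]
  have hueq : u (2 * Real.pi) = u 0 := huconst _ (Set.mem_univ _) _ (Set.mem_univ _)
  have : ((k':ℂ) - k) * (4 * Real.pi * Complex.I) = 0 := by
    have h0 : u 0 = ψ' (γ 0) - ψ (γ 0) := by
      simp only [hu_def]
      push_cast
      ring
    have h2π : u (2 * Real.pi) = ((k':ℂ) - k) * (4 * Real.pi * Complex.I)
        + (ψ' (γ 0) - ψ (γ 0)) := by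
      simp only [hu_def]
      rw [hγper]
      push_cast
      ring
    rw [h2π, h0] at hueq
    linear_combination hueq
  have hkk : (k':ℂ) = k := by
    rcases mul_eq_zero.mp this with h3 | h3
    · linear_combination h3
    · exfalso
      have h4 : (Real.pi:ℂ) ≠ 0 := Complex.ofReal_ne_zero.mpr hπne
      have h5 : (4:ℂ) ≠ 0 := by norm_num
      apply Complex.I_ne_zero
      exact (mul_eq_zero.mp h3).resolve_left (mul_ne_zero h5 h4)
  exact_mod_cast hkk
end
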